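/- arXiv:2208.11872 — 3 statements merged into one kernel-verified Lean document; each statement's English description precedes it below -/
import Mathlib

section
/- If $I \subset [0,1]$ satisfies the DCC, then the set $I_+ = \{0\} \cup \{ j \in [0,1] \mid j = i_1 + \cdots + i_l \text{ for some } l \geq 1 \text{ and } i_1, \dots, i_l \in I \}$ also satisfies the DCC. -/
open Pointwise


def SatisfiesDCC (S : Set ℝ) : Prop :=
  ¬ ∃ f : ℕ → ℝ, (∀ n, f n ∈ S) ∧ ∀ n, f (n + 1) < f n

def SatisfiesACC (S : Set ℝ) : Prop :=
  ¬ ∃ f : ℕ → ℝ, (∀ n, f n ∈ S) ∧ ∀ n, f n < f (n + 1)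

def IPlus (I : Set ℝ) : Set ℝ :=
  {0} ∪ {j | j ∈ Set.Icc (0 : ℝ) 1 ∧
    ∃ l : List ℝ, l ≠ [] ∧ (∀ x ∈ l, x ∈ I) ∧ l.sum = j}

def DSet (I : Set ℝ) : Set ℝ :=
  {a | ∃ m : ℕ, 0 < m ∧ ∃ f ∈ IPlus I, a = (m - 1 + f) / m}

lemma satisfiesDCC_iff_isWF (S : Set ℝ) : SatisfiesDCC S ↔ S.IsWF := by
  rw [Set.isWF_iff_no_descending_seq]
  constructor
  · intro h f hf hmem
    exact h ⟨f, hmem, fun n => hf (Nat.lt_succ_self n)⟩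
  · rintro h ⟨f, hmem, hlt⟩
    exact h f (strictAnti_nat_of_succ_lt hlt) hmem

/-- sums of lists of length ≤ k with entries in J -/
def sumsLen (J : Set ℝ) (k : ℕ) : Set ℝ :=
  {x | ∃ l : List ℝ, (∀ a ∈ l, a ∈ J) ∧ l.length ≤ k ∧ l.sum = x}

lemma sumsLen_isWF (J : Set ℝ) (hJ : J.IsWF) : ∀ k, (sumsLen J k).IsWF := by
  intro k
  induction k with
  | zero =>
    have : sumsLen J 0 ⊆ {0} := by
      rintro x ⟨l, _, hlen, hsum⟩
      have : l = [] := List.eq_nil_of_length_eq_zero (Nat.le_zero.mp hlen)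
      simp [this] at hsum
      simp [← hsum]
    exact Set.isWF_singleton.mono this
  | succ k ih =>
    have hsub : sumsLen J (k + 1) ⊆ sumsLen J k ∪ (J + sumsLen J k) := by
      rintro x ⟨l, hmem, hlen, hsum⟩
      cases l with
      | nil => exact Or.inl ⟨[], by simp, by simp, by simpa using hsum⟩
      | cons a t =>
        right
        have ht : t.sum ∈ sumsLen J k :=
          ⟨t, fun b hb => hmem b (by simp [hb]), by simpa using hlen, rfl⟩
        have := Set.add_mem_add (hmem a (by simp)) ht
        simpa [← hsum, List.sum_cons] using this
    exact (ih.union (hJ.add ih)).mono hsub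

lemma mul_length_le_sum (ε : ℝ) : ∀ l : List ℝ, (∀ a ∈ l, ε ≤ a) → ε * l.length ≤ l.sum := by
  intro l
  induction l with
  | nil => simp
  | cons a t ih =>
    intro h
    have h1 : ε ≤ a := h a (by simp)
    have h2 := ih fun b hb => h b (by simp [hb])
    simp only [List.length_cons, List.sum_cons, Nat.cast_add, Nat.cast_one]
    calc ε * (t.length + 1) = ε + ε * t.length := by ring
    _ ≤ a + t.sum := add_le_add h1 h2

lemma sum_filter_ne_zero' : ∀ l : List ℝ, (l.filter (fun x => x ≠ 0)).sum = l.sum := by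
  intro l
  induction l with
  | nil => simp
  | cons a t ih =>
    by_cases ha : a = 0
    · simp only [List.filter_cons, ha, ne_eq, decide_not] at *
      simpa [ha] using ih
    · simp only [List.filter_cons, ne_eq, decide_not] at *
      simp [ha, List.sum_cons, ih]

theorem dcc_IPlus (I : Set ℝ) (hI : I ⊆ Set.Icc 0 1)
    (hdcc : SatisfiesDCC I) : SatisfiesDCC (IPlus I) := by
  rw [satisfiesDCC_iff_isWF] at hdcc ⊢
  -- positive part of I, with 1 inserted to get a positive minimum
  set J : Set ℝ := I ∩ Set.Ioi 0 with hJdef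
  have hJ : J.IsWF := hdcc.mono Set.inter_subset_left
  have hJ' : (insert (1 : ℝ) J).IsWF := hJ.insert 1
  have hne : (insert (1 : ℝ) J).Nonempty := ⟨1, Set.mem_insert 1 J⟩
  set ε := hJ'.min hne with hε
  have hεpos : 0 < ε := by
    have := hJ'.min_mem hne
    rcases this with h | h
    · rw [← hε] at *; simp [h]
    · exact h.2
  have hεle : ∀ a ∈ J, ε ≤ a := fun a ha => hJ'.min_le hne (Set.mem_insert_of_mem 1 ha)
  set N := ⌈1 / ε⌉₊ with hN
  refine (sumsLen_isWF J hJ N).mono ?_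
  rintro x (hx | ⟨⟨hx0, hx1⟩, l, -, hmem, hsum⟩)
  · exact ⟨[], by simp, by simp, by simpa using hx.symm⟩
  · -- filter out the zeros
    refine ⟨l.filter (fun x => x ≠ 0), ?_, ?_, by rw [sum_filter_ne_zero', hsum]⟩
    · intro a ha
      rw [List.mem_filter] at ha
      have haI := hmem a ha.1
      have hane : a ≠ 0 := by simpa using ha.2
      exact ⟨haI, lt_of_le_of_ne (hI haI).1 (Ne.symm hane)⟩
    · -- length bound
      set l' := l.filter (fun x => x ≠ 0) with hl'
      have hmem' : ∀ a ∈ l', ε ≤ a := by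
        intro a ha
        rw [hl', List.mem_filter] at ha
        have haI := hmem a ha.1
        have hane : a ≠ 0 := by simpa using ha.2
        exact hεle a ⟨haI, lt_of_le_of_ne (hI haI).1 (Ne.symm hane)⟩
      have hsum' : ε * l'.length ≤ 1 := by
        calc ε * l'.length ≤ l'.sum := mul_length_le_sum ε l' hmem'
        _ = l.sum := sum_filter_ne_zero' l
        _ ≤ 1 := by rw [hsum]; exact hx1
      have : (l'.length : ℝ) ≤ 1 / ε := by
        rw [le_div_iff₀ hεpos]; linarith [hsum']
      have : (l'.length : ℝ) ≤ (N : ℝ) := this.trans (Nat.le_ceil _)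
      exact_mod_cast this
end

section
/- If $S$ is a set of positive real numbers satisfying the ACC, then the set $\{ s/k \mid s \in S,\ k \in \mathbb{Z}_{>0} \}$ also satisfies the ACC. -/
lemma acc_bddAbove {S : Set ℝ} (hacc : SatisfiesACC S) : BddAbove S := by
  by_contra hb
  rw [not_bddAbove_iff] at hb
  choose c hc hlt using hb
  refine hacc ⟨fun n => (fun x => c x) ^[n+1] 0, ?_, ?_⟩
  · intro n
    show (fun x => c x)^[n+1] 0 ∈ S
    rw [Function.iterate_succ_apply']
    exact hc _
  · intro n
    show (fun x => c x)^[n+1] 0 < (fun x => c x)^[n+1+1] 0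
    conv_rhs => rw [Function.iterate_succ_apply']
    exact hlt _

theorem acc_div_nat (S : Set ℝ) (hS : S ⊆ Set.Ioi 0)
    (hacc : SatisfiesACC S) :
    SatisfiesACC {x : ℝ | ∃ s ∈ S, ∃ k : ℕ, 0 < k ∧ x = s / k} := by
  rintro ⟨f, hmem, hlt⟩
  choose s hsS k hk hfsk using hmem
  have hmono : StrictMono f := strictMono_nat_of_lt_succ hlt
  obtain ⟨M, hM⟩ := acc_bddAbove hacc
  have hf0 : 0 < f 0 := by
    rw [hfsk 0]
    exact div_pos (hS (hsS 0)) (Nat.cast_pos.mpr (hk 0))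
  have hsk : ∀ n, s n = f n * k n := by
    intro n
    rw [hfsk n, div_mul_cancel₀ _ (Nat.cast_ne_zero.mpr (hk n).ne')]
  have hkb : ∀ n, (k n : ℝ) ≤ M / f 0 := by
    intro n
    have hfn : f 0 ≤ f n := hmono.monotone (Nat.zero_le n)
    have hsM : s n ≤ M := hM (hsS n)
    have hkn : (0:ℝ) ≤ k n := Nat.cast_nonneg _
    have : f 0 * k n ≤ M := by
      calc f 0 * k n ≤ f n * k n := mul_le_mul_of_nonneg_right hfn hkn
        _ = s n := (hsk n).symm
        _ ≤ M := hsM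
    rw [le_div_iff₀ hf0]
    linarith
  obtain ⟨N, hN⟩ : ∃ N : ℕ, ∀ n, k n ≤ N := by
    obtain ⟨N, hNn⟩ := exists_nat_ge (M / f 0)
    exact ⟨N, fun n => Nat.cast_le.mp ((hkb n).trans hNn)⟩
  obtain ⟨m, hm⟩ := Finite.exists_infinite_fiber
    (fun n : ℕ => (⟨k n, Nat.lt_succ_of_le (hN n)⟩ : Fin (N+1)))
  rw [Set.infinite_coe_iff] at hm
  have hinf : {n : ℕ | k n = m.1}.Infinite := by
    apply hm.mono
    intro n hn
    simp only [Set.mem_preimage, Set.mem_singleton_iff] at hn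
    simpa using congrArg Fin.val hn
  set P := fun n => k n = m.1 with hP
  have hnth_mem : ∀ j, k (Nat.nth P j) = m.1 := fun j => Nat.nth_mem_of_infinite hinf j
  have hnth_mono : StrictMono (Nat.nth P) := Nat.nth_strictMono hinf
  have hm0 : 0 < m.1 := hnth_mem 0 ▸ hk (Nat.nth P 0)
  refine hacc ⟨fun j => s (Nat.nth P j), fun j => hsS _, fun j => ?_⟩
  show s (Nat.nth P j) < s (Nat.nth P (j+1))
  rw [hsk, hsk, hnth_mem, hnth_mem]
  have : f (Nat.nth P j) < f (Nat.nth P (j+1)) :=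
    hmono (hnth_mono (Nat.lt_succ_self j))
  have hmpos : (0:ℝ) < m.1 := Nat.cast_pos.mpr hm0
  exact mul_lt_mul_of_pos_right this hmpos
end

section
/- Fix a finite set $K_0 \subset [0,1]$ and a set $K \subset [0,1]$ satisfying the DCC. Then the set of positive real numbers $x$ such that $(m - 1 + f + kx)/m \in K_0$ for some positive integers $m, k$ and some $f \in K_+$ satisfies the ACC. -/
open Set Pointwise

lemma dcc_isWF {S : Set ℝ} (h : SatisfiesDCC S) : S.IsWF := by
  rw [Set.isWF_iff_no_descending_seq]
  intro f hf hmem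
  exact h ⟨f, fun n => hmem n, fun n => hf (Nat.lt_succ_self n)⟩

/-- iterated sumset -/
def iterSum (P : Set ℝ) : ℕ → Set ℝ
  | 0 => {0}
  | n + 1 => P + iterSum P n

lemma iterSum_isWF {P : Set ℝ} (hP : P.IsWF) : ∀ n, (iterSum P n).IsWF
  | 0 => (Set.finite_singleton 0).isWF
  | n + 1 => hP.add (iterSum_isWF hP n)

lemma list_sum_mem_iterSum {K : Set ℝ} (hK : K ⊆ Set.Icc 0 1) {δ : ℝ}
    (hδ : ∀ x ∈ K, 0 < x → δ ≤ x) :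
    ∀ l : List ℝ, (∀ x ∈ l, x ∈ K) →
      ∃ i : ℕ, (i : ℝ) * δ ≤ l.sum ∧ l.sum ∈ iterSum (K ∩ Set.Ioi 0) i := by
  intro l
  induction l with
  | nil => intro _; exact ⟨0, by simp, by simp [iterSum]⟩
  | cons a l ih =>
    intro hmem
    obtain ⟨i, h1, h2⟩ := ih fun x hx => hmem x (List.mem_cons_of_mem a hx)
    have haK : a ∈ K := hmem a List.mem_cons_self
    by_cases ha : 0 < a
    · refine ⟨i + 1, ?_, ?_⟩
      · have : δ ≤ a := hδ a haK ha
        push_cast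
        rw [List.sum_cons]
        nlinarith
      · rw [List.sum_cons]
        exact Set.add_mem_add ⟨haK, ha⟩ h2
    · have ha0 : a = 0 := le_antisymm (not_lt.1 ha) (hK haK).1
      refine ⟨i, ?_, ?_⟩ <;> simp [List.sum_cons, ha0, h1, h2]

lemma iplus_isWF {K : Set ℝ} (hK : K ⊆ Set.Icc 0 1) (hKwf : K.IsWF) :
    (IPlus K).IsWF := by
  obtain ⟨δ, hδpos, hδ⟩ : ∃ δ : ℝ, 0 < δ ∧ ∀ x ∈ K, 0 < x → δ ≤ x := by
    by_cases hne : (K ∩ Set.Ioi (0 : ℝ)).Nonempty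
    · have hPwf : (K ∩ Set.Ioi (0 : ℝ)).IsWF := hKwf.mono Set.inter_subset_left
      exact ⟨hPwf.min hne, (hPwf.min_mem hne).2, fun x hx hx0 =>
        hPwf.min_le hne ⟨hx, hx0⟩⟩
    · exact ⟨1, one_pos, fun x hx hx0 => absurd ⟨x, hx, hx0⟩ hne⟩
  set N : ℕ := ⌈1 / δ⌉₊ with hN
  have hsub : IPlus K ⊆ ⋃ i ∈ Finset.range (N + 1), iterSum (K ∩ Set.Ioi 0) i := by
    rintro j (hj | ⟨⟨hj0, hj1⟩, l, -, hlmem, hlsum⟩)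
    · simp only [Set.mem_singleton_iff] at hj
      subst hj
      exact Set.mem_biUnion (Finset.mem_range.2 (Nat.succ_pos N)) (by simp [iterSum])
    · obtain ⟨i, h1, h2⟩ := list_sum_mem_iterSum hK hδ l hlmem
      rw [hlsum] at h1 h2
      have hiN : i ≤ N := by
        have h3 : (i : ℝ) ≤ 1 / δ := by
          rw [le_div_iff₀ hδpos]; linarith
        have h4 : (i : ℝ) ≤ (N : ℝ) := h3.trans (Nat.le_ceil _)
        exact_mod_cast h4
      exact Set.mem_biUnion (Finset.mem_range.2 (Nat.lt_succ_of_le hiN)) h2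
  refine Set.IsWF.mono ?_ hsub
  rw [Finset.isWF_bUnion]
  intro i _
  exact iterSum_isWF (hKwf.mono Set.inter_subset_left) i

theorem acc_lemma_5_2 (K₀ K : Set ℝ) (hfin : K₀.Finite) (hK₀ : K₀ ⊆ Set.Icc 0 1)
    (hK : K ⊆ Set.Icc 0 1) (hdcc : SatisfiesDCC K) :
    SatisfiesACC {x : ℝ | 0 < x ∧ ∃ m k : ℕ, 0 < m ∧ 0 < k ∧
      ∃ f ∈ IPlus K, (m - 1 + f + k * x) / m ∈ K₀} := by
  rintro ⟨x, hmem, hinc⟩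
  have hxmono : StrictMono x := strictMono_nat_of_lt_succ hinc
  choose hxpos m k hm hk f hfmem hy using hmem
  set y : ℕ → ℝ := fun n => ((m n : ℝ) - 1 + f n + (k n : ℝ) * x n) / (m n : ℝ) with hy_def
  have hmne : ∀ n, (m n : ℝ) ≠ 0 := fun n => Nat.cast_ne_zero.2 (hm n).ne'
  have hf_nonneg : ∀ n, 0 ≤ f n := by
    intro n
    rcases hfmem n with h | ⟨⟨h0, _⟩, _⟩
    · simp only [Set.mem_singleton_iff] at h; rw [h]
    · exact h0
  -- key identity
  have hkey : ∀ n, 1 - (k n : ℝ) * x n = f n + (m n : ℝ) * (1 - y n) := by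
    intro n
    have hmy : (m n : ℝ) * y n = (m n : ℝ) - 1 + f n + (k n : ℝ) * x n := by
      rw [hy_def]
      field_simp
      rw [mul_comm, mul_div_assoc, div_self (hmne n), mul_one]
    have hexp : (m n : ℝ) * (1 - y n) = (m n : ℝ) - (m n : ℝ) * y n := by ring
    linarith
  have hy1 : ∀ n, y n ≤ 1 := fun n => (hK₀ (hy n)).2
  have hkx_le : ∀ n, (k n : ℝ) * x n ≤ 1 := by
    intro n
    have h1 := hkey n
    have h2 : 0 ≤ (m n : ℝ) * (1 - y n) :=
      mul_nonneg (Nat.cast_nonneg _) (by linarith [hy1 n])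
    nlinarith [hf_nonneg n]
  have hkx_pos : ∀ n, 0 < (k n : ℝ) * x n := fun n =>
    mul_pos (by exact_mod_cast (hk n)) (hxpos n)
  -- bound on k
  set B : ℕ := ⌈1 / x 0⌉₊ with hB
  have hkB : ∀ n, k n ≤ B := by
    intro n
    have hx0 : 0 < x 0 := hxpos 0
    have hxn : x 0 ≤ x n := hxmono.monotone (Nat.zero_le n)
    have h1 : (k n : ℝ) ≤ 1 / x 0 := by
      rw [le_div_iff₀ hx0]
      calc (k n : ℝ) * x 0 ≤ (k n : ℝ) * x n :=
            mul_le_mul_of_nonneg_left hxn (Nat.cast_nonneg _)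
        _ ≤ 1 := hkx_le n
    have h2 : (k n : ℝ) ≤ (B : ℝ) := h1.trans (Nat.le_ceil _)
    exact_mod_cast h2
  -- pigeonhole on k
  set g : ℕ → Fin (B + 1) := fun n => ⟨k n, Nat.lt_succ_of_le (hkB n)⟩ with hg
  obtain ⟨v, hv⟩ := Finite.exists_infinite_fiber g
  have hp : {n | g n = v}.Infinite := by
    rw [← Set.infinite_coe_iff]
    exact hv
  set φ : ℕ → ℕ := Nat.nth (fun n => g n = v) with hφ
  have hφmono : StrictMono φ := Nat.nth_strictMono hp
  have hφmem : ∀ n, k (φ n) = (v : ℕ) := by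
    intro n
    have := Nat.nth_mem_of_infinite hp n
    exact congrArg Fin.val this
  -- the decreasing sequence
  set s : ℕ → ℝ := fun n => 1 - ((v : ℕ) : ℝ) * x (φ n) with hs
  have hs_anti : ∀ n, s (n + 1) < s n := by
    intro n
    have hv1 : (1 : ℝ) ≤ ((v : ℕ) : ℝ) := by
      have := hk (φ n)
      rw [hφmem n] at this
      exact_mod_cast this
    have : x (φ n) < x (φ (n + 1)) := hxmono (hφmono (Nat.lt_succ_self n))
    have : ((v : ℕ) : ℝ) * x (φ n) < ((v : ℕ) : ℝ) * x (φ (n + 1)) :=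
      mul_lt_mul_of_pos_left this (by linarith)
    simp only [hs]
    linarith
  -- the set containing the sequence
  set K' : Set ℝ := K ∪ ((fun t => 1 - t) '' K₀) with hK'
  have hK'sub : K' ⊆ Set.Icc 0 1 := by
    rintro t (ht | ⟨u, hu, rfl⟩)
    · exact hK ht
    · obtain ⟨h0, h1⟩ := hK₀ hu
      exact ⟨by show (0:ℝ) ≤ 1 - u; linarith, by show (1:ℝ) - u ≤ 1; linarith⟩
  have hK'wf : K'.IsWF := (dcc_isWF hdcc).union ((hfin.image _).isWF)
  have hs_mem : ∀ n, s n ∈ IPlus K' := by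
    intro n
    set j := φ n with hj
    have hkv : k j = (v : ℕ) := hφmem n
    have hsval : s n = 1 - (k j : ℝ) * x j := by
      simp only [hs, hkv]; rfl
    have hkeyj := hkey j
    -- obtain a list for f j
    obtain ⟨l₀, hl₀mem, hl₀sum⟩ :
        ∃ l₀ : List ℝ, (∀ t ∈ l₀, t ∈ K) ∧ l₀.sum = f j := by
      rcases hfmem j with h | ⟨_, l, _, hlm, hls⟩
      · simp only [Set.mem_singleton_iff] at h
        exact ⟨[], by simp, by simp [h]⟩
      · exact ⟨l, hlm, hls⟩
    refine Or.inr ⟨⟨?_, ?_⟩, l₀ ++ List.replicate (m j) (1 - y j), ?_, ?_, ?_⟩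
    · rw [hsval]; linarith [hkx_le j]
    · rw [hsval]; linarith [hkx_pos j]
    · intro h
      have := congrArg List.length h
      simp only [List.length_append, List.length_replicate, List.length_nil] at this
      have hmj := hm j
      omega
    · intro t ht
      rw [List.mem_append] at ht
      rcases ht with ht | ht
      · exact Or.inl (hl₀mem t ht)
      · rw [List.eq_of_mem_replicate ht]
        exact Or.inr ⟨y j, hy j, rfl⟩
    · rw [List.sum_append, List.sum_replicate, hl₀sum, nsmul_eq_mul, hsval, hkeyj]
  -- contradiction with DCC of IPlus K'
  have hwf := iplus_isWF hK'sub hK'wf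
  rw [Set.isWF_iff_no_descending_seq] at hwf
  exact hwf s (strictAnti_nat_of_succ_lt hs_anti) hs_mem
end
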